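/- Let R be a commutative ring, A a bialgebra over R, and F₁, F₂ two A-module algebras. For K ∈ F₁ ⊗_R F₂, the R-linear operator π(K) : F₁ ⊗_R F₂ → F₁ ⊗_R F₂ is a morphism of A-modules (i.e. A-linear for the comultiplication action on F₁ ⊗_R F₂) if and only if K is invariant, i.e. a • K = ε(a)·K for all a ∈ A. -/

import Mathlib

set_option maxHeartbeats 1000000
set_option synthInstance.maxHeartbeats 400000

open TensorProduct

/-- Given `R`-linear actions `ρ₁ : A → End F`, `ρ₂ : A → End G`, the action of
`a : A` on `F ⊗[R] G` obtained by restricting the `(A ⊗ A)`-action along the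
comultiplication: `a • (ψ₁ ⊗ ψ₂) = Σ (a₍₁₎ • ψ₁) ⊗ (a₍₂₎ • ψ₂)`. -/
noncomputable def tensorAct (R : Type*) {A F G : Type*} [CommRing R] [Ring A]
    [Bialgebra R A] [AddCommGroup F] [Module R F] [AddCommGroup G] [Module R G]
    (ρ₁ : A →ₗ[R] F →ₗ[R] F) (ρ₂ : A →ₗ[R] G →ₗ[R] G) (a : A) :
    F ⊗[R] G →ₗ[R] F ⊗[R] G :=
  TensorProduct.homTensorHomMap (RingHom.id R) F G F G
    (TensorProduct.map ρ₁ ρ₂ (Coalgebra.comul a))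

/-- The representation `π` of the algebra `F₁ᵒᵖ ⊗[R] F₂` on the vector space
`F₁ ⊗[R] F₂`: for `K = Σ f₁ ⊗ f₂` one has
`π K (ψ₁ ⊗ ψ₂) = Σ (ψ₁ * f₁) ⊗ (f₂ * ψ₂)`. -/
noncomputable def piMap (R : Type*) {F G : Type*} [CommRing R] [Ring F]
    [Algebra R F] [Ring G] [Algebra R G] :
    F ⊗[R] G →ₗ[R] F ⊗[R] G →ₗ[R] F ⊗[R] G :=
  (TensorProduct.homTensorHomMap (RingHom.id R) F G F G).comp
    (TensorProduct.map (LinearMap.mul R F).flip (LinearMap.mul R G))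

section AuxDefs

variable {R A F₁ F₂ : Type*} [CommRing R] [Ring A] [Bialgebra R A]
    [Ring F₁] [Algebra R F₁] [Ring F₂] [Algebra R F₂]
    (ρ₁ : A →ₗ[R] F₁ →ₗ[R] F₁) (ρ₂ : A →ₗ[R] F₂ →ₗ[R] F₂)

/-- `Phi (x ⊗ y) (ψ₁ ⊗ ψ₂) = ρ₁ x ψ₁ ⊗ ρ₂ y ψ₂`. -/
noncomputable def Phi : A ⊗[R] A →ₗ[R] (F₁ ⊗[R] F₂) →ₗ[R] (F₁ ⊗[R] F₂) :=
  (TensorProduct.homTensorHomMap (RingHom.id R) F₁ F₂ F₁ F₂) ∘ₗ TensorProduct.map ρ₁ ρ₂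

lemma tensorAct_eq (a : A) : tensorAct R ρ₁ ρ₂ a = Phi ρ₁ ρ₂ (Coalgebra.comul a) := rfl

@[simp] lemma Phi_tmul (x y : A) (ψ₁ : F₁) (ψ₂ : F₂) :
    Phi ρ₁ ρ₂ (x ⊗ₜ[R] y) (ψ₁ ⊗ₜ[R] ψ₂) = ρ₁ x ψ₁ ⊗ₜ[R] ρ₂ y ψ₂ := by
  simp [Phi]

@[simp] lemma piMap_tmul (f₁ ψ₁ : F₁) (f₂ ψ₂ : F₂) :
    piMap R (f₁ ⊗ₜ[R] f₂) (ψ₁ ⊗ₜ[R] ψ₂) = (ψ₁ * f₁) ⊗ₜ[R] (f₂ * ψ₂) := by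
  simp [piMap, LinearMap.mul_apply']

/-- `Smap (p ⊗ (q ⊗ L)) = piMap (Phi q L) ∘ Phi p`. -/
noncomputable def Smap :
    (A ⊗[R] A) ⊗[R] ((A ⊗[R] A) ⊗[R] (F₁ ⊗[R] F₂)) →ₗ[R]
      (F₁ ⊗[R] F₂) →ₗ[R] (F₁ ⊗[R] F₂) :=
  TensorProduct.lift
    ((((LinearMap.llcomp R (F₁ ⊗[R] F₂) (F₁ ⊗[R] F₂) (F₁ ⊗[R] F₂)).flip) ∘ₗ Phi ρ₁ ρ₂).compl₂
      ((piMap R) ∘ₗ TensorProduct.lift (Phi ρ₁ ρ₂)))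

@[simp] lemma Smap_tmul (p q : A ⊗[R] A) (L : F₁ ⊗[R] F₂) :
    Smap ρ₁ ρ₂ (p ⊗ₜ[R] (q ⊗ₜ[R] L)) = piMap R (Phi ρ₁ ρ₂ q L) ∘ₗ Phi ρ₁ ρ₂ p := by
  simp [Smap, LinearMap.llcomp_apply', LinearMap.compl₂_apply]

/-- `Mmap (u ⊗ L) = Phi u ∘ piMap L`. -/
noncomputable def Mmap :
    (A ⊗[R] A) ⊗[R] (F₁ ⊗[R] F₂) →ₗ[R] (F₁ ⊗[R] F₂) →ₗ[R] (F₁ ⊗[R] F₂) :=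
  TensorProduct.lift
    (((LinearMap.llcomp R (F₁ ⊗[R] F₂) (F₁ ⊗[R] F₂) (F₁ ⊗[R] F₂)) ∘ₗ Phi ρ₁ ρ₂).compl₂
      (piMap R))

@[simp] lemma Mmap_tmul (u : A ⊗[R] A) (L : F₁ ⊗[R] F₂) :
    Mmap ρ₁ ρ₂ (u ⊗ₜ[R] L) = Phi ρ₁ ρ₂ u ∘ₗ piMap R L := by
  simp [Mmap, LinearMap.llcomp_apply', LinearMap.compl₂_apply]

end AuxDefs

section Swap
variable (R A : Type*) [CommRing R] [Ring A] [Bialgebra R A]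

/-- `(x₁⊗x₂)⊗(y₁⊗y₂) ↦ (x₁⊗y₂)⊗(x₂⊗y₁)` -/
noncomputable def mSwap :
    (A ⊗[R] A) ⊗[R] (A ⊗[R] A) →ₗ[R] (A ⊗[R] A) ⊗[R] (A ⊗[R] A) :=
  (TensorProduct.tensorTensorTensorComm R A A A A).toLinearMap ∘ₗ
    LinearMap.lTensor (A ⊗[R] A) (TensorProduct.comm R A A).toLinearMap

@[simp] lemma mSwap_tmul (x₁ x₂ y₁ y₂ : A) :
    mSwap R A ((x₁ ⊗ₜ[R] x₂) ⊗ₜ[R] (y₁ ⊗ₜ[R] y₂)) = (x₁ ⊗ₜ[R] y₂) ⊗ₜ[R] (x₂ ⊗ₜ[R] y₁) := by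
  simp [mSwap]

end Swap

section Coassoc
variable {R A : Type*} [CommRing R] [Ring A] [Bialgebra R A]

lemma hcomm1 :
    (Coalgebra.comul (R := R) (A := A)).rTensor (A ⊗[R] A) ∘ₗ
        (TensorProduct.assoc R A A A).toLinearMap =
      (TensorProduct.assoc R (A ⊗[R] A) A A).toLinearMap ∘ₗ
        ((Coalgebra.comul (R := R) (A := A)).rTensor A).rTensor A := by
  apply TensorProduct.ext'
  intro p z
  induction p using TensorProduct.induction_on with
  | zero => simp only [zero_tmul, map_zero]
  | add p q hp hq => simp only [add_tmul, map_add, hp, hq]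
  | tmul x y =>
    simp only [LinearMap.comp_apply, LinearEquiv.coe_coe, assoc_tmul,
      LinearMap.rTensor_tmul]

lemma E2 :
    (TensorProduct.map Coalgebra.comul Coalgebra.comul) ∘ₗ
        (Coalgebra.comul (R := R) (A := A)) =
      (TensorProduct.assoc R (A ⊗[R] A) A A).toLinearMap ∘ₗ
        ((TensorProduct.assoc R A A A).symm.toLinearMap.rTensor A) ∘ₗ
        (((Coalgebra.comul (R := R) (A := A)).lTensor A).rTensor A) ∘ₗ
        ((Coalgebra.comul (R := R) (A := A)).rTensor A) ∘ₗ
        Coalgebra.comul := by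
  calc (TensorProduct.map Coalgebra.comul Coalgebra.comul) ∘ₗ
        (Coalgebra.comul (R := R) (A := A))
      = (Coalgebra.comul (R := R) (A := A)).rTensor (A ⊗[R] A) ∘ₗ
          ((Coalgebra.comul (R := R) (A := A)).lTensor A ∘ₗ Coalgebra.comul) := by
        rw [← LinearMap.rTensor_comp_lTensor, LinearMap.comp_assoc]
    _ = (Coalgebra.comul (R := R) (A := A)).rTensor (A ⊗[R] A) ∘ₗ
          ((TensorProduct.assoc R A A A).toLinearMap ∘ₗ
            ((Coalgebra.comul (R := R) (A := A)).rTensor A ∘ₗ Coalgebra.comul)) := by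
        rw [← Coalgebra.coassoc]
    _ = ((Coalgebra.comul (R := R) (A := A)).rTensor (A ⊗[R] A) ∘ₗ
          (TensorProduct.assoc R A A A).toLinearMap) ∘ₗ
          ((Coalgebra.comul (R := R) (A := A)).rTensor A ∘ₗ Coalgebra.comul) := by
        rw [LinearMap.comp_assoc]
    _ = (TensorProduct.assoc R (A ⊗[R] A) A A).toLinearMap ∘ₗ
          (((Coalgebra.comul (R := R) (A := A)).rTensor A).rTensor A ∘ₗ
            ((Coalgebra.comul (R := R) (A := A)).rTensor A ∘ₗ Coalgebra.comul)) := by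
        rw [hcomm1, LinearMap.comp_assoc]
    _ = (TensorProduct.assoc R (A ⊗[R] A) A A).toLinearMap ∘ₗ
          ((((Coalgebra.comul (R := R) (A := A)).rTensor A ∘ₗ Coalgebra.comul).rTensor A) ∘ₗ
            Coalgebra.comul) := by
        rw [LinearMap.rTensor_comp, LinearMap.comp_assoc]
    _ = (TensorProduct.assoc R (A ⊗[R] A) A A).toLinearMap ∘ₗ
          ((((TensorProduct.assoc R A A A).symm.toLinearMap ∘ₗ
              ((Coalgebra.comul (R := R) (A := A)).lTensor A ∘ₗ Coalgebra.comul)).rTensor A) ∘ₗ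
            Coalgebra.comul) := by
        rw [← Coalgebra.coassoc_symm]
    _ = (TensorProduct.assoc R (A ⊗[R] A) A A).toLinearMap ∘ₗ
        ((TensorProduct.assoc R A A A).symm.toLinearMap.rTensor A) ∘ₗ
        (((Coalgebra.comul (R := R) (A := A)).lTensor A).rTensor A) ∘ₗ
        ((Coalgebra.comul (R := R) (A := A)).rTensor A) ∘ₗ
        Coalgebra.comul := by
        rw [LinearMap.rTensor_comp, LinearMap.rTensor_comp]
        simp only [LinearMap.comp_assoc]

lemma counit_collapse :
    ((((TensorProduct.rid R A).toLinearMap ∘ₗ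
        (Coalgebra.counit (R := R) (A := A)).lTensor A).rTensor A) ∘ₗ
      ((Coalgebra.comul (R := R) (A := A)).rTensor A)) ∘ₗ Coalgebra.comul =
      Coalgebra.comul (R := R) (A := A) := by
  rw [← LinearMap.rTensor_comp]
  have h : (TensorProduct.rid R A).toLinearMap ∘ₗ
      (Coalgebra.counit (R := R) (A := A)).lTensor A ∘ₗ Coalgebra.comul
      = LinearMap.id := by
    apply LinearMap.ext
    intro a
    simp [Coalgebra.lTensor_counit_comul]
  rw [LinearMap.comp_assoc, h, LinearMap.rTensor_id, LinearMap.id_comp]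

lemma counit_counit (a : A) :
    (TensorProduct.lid R R)
      (TensorProduct.map Coalgebra.counit Coalgebra.counit
        (Coalgebra.comul (R := R) a)) = Coalgebra.counit (R := R) a := by
  have h : TensorProduct.map (Coalgebra.counit (R := R) (A := A)) Coalgebra.counit
      = (Coalgebra.counit (R := R) (A := A)).rTensor R ∘ₗ
        (Coalgebra.counit (R := R) (A := A)).lTensor A := by
    rw [LinearMap.rTensor_comp_lTensor]
  rw [h]
  simp only [LinearMap.comp_apply, Coalgebra.lTensor_counit_comul,
    LinearMap.rTensor_tmul, lid_tmul, smul_eq_mul, mul_one]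

end Coassoc

section Chain

variable {R A F₁ F₂ : Type*} [CommRing R] [Ring A] [Bialgebra R A]
    [Ring F₁] [Algebra R F₁] [Ring F₂] [Algebra R F₂]
    (ρ₁ : A →ₗ[R] F₁ →ₗ[R] F₁) (ρ₂ : A →ₗ[R] F₂ →ₗ[R] F₂)

noncomputable def Nmap :
    (A ⊗[R] A) ⊗[R] (F₁ ⊗[R] F₂) →ₗ[R] (F₁ ⊗[R] F₂) →ₗ[R] (F₁ ⊗[R] F₂) :=
  (Smap ρ₁ ρ₂) ∘ₗ
    (TensorProduct.assoc R (A ⊗[R] A) (A ⊗[R] A) (F₁ ⊗[R] F₂)).toLinearMap ∘ₗ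
    ((mSwap R A ∘ₗ TensorProduct.map Coalgebra.comul Coalgebra.comul).rTensor (F₁ ⊗[R] F₂))

lemma claim1
    (h1cov : ∀ a : A,
      (LinearMap.mul' R F₁) ∘ₗ tensorAct R ρ₁ ρ₁ a = ρ₁ a ∘ₗ LinearMap.mul' R F₁)
    (h2cov : ∀ a : A,
      (LinearMap.mul' R F₂) ∘ₗ tensorAct R ρ₂ ρ₂ a = ρ₂ a ∘ₗ LinearMap.mul' R F₂) :
    Mmap ρ₁ ρ₂ = Nmap ρ₁ ρ₂ := by
  have h1cov' : ∀ (x : A) (ψ f : F₁), ρ₁ x (ψ * f) =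
      LinearMap.mul' R F₁
        (TensorProduct.homTensorHomMap (RingHom.id R) F₁ F₁ F₁ F₁
          (TensorProduct.map ρ₁ ρ₁ (Coalgebra.comul x)) (ψ ⊗ₜ[R] f)) := by
    intro x ψ f
    have := LinearMap.congr_fun (h1cov x) (ψ ⊗ₜ[R] f)
    simpa [tensorAct] using this.symm
  have h2cov' : ∀ (y : A) (f ψ : F₂), ρ₂ y (f * ψ) =
      LinearMap.mul' R F₂
        (TensorProduct.homTensorHomMap (RingHom.id R) F₂ F₂ F₂ F₂
          (TensorProduct.map ρ₂ ρ₂ (Coalgebra.comul y)) (f ⊗ₜ[R] ψ)) := by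
    intro y f ψ
    have := LinearMap.congr_fun (h2cov y) (f ⊗ₜ[R] ψ)
    simpa [tensorAct] using this.symm
  apply TensorProduct.ext'
  intro u L
  induction u using TensorProduct.induction_on with
  | zero => simp only [zero_tmul, map_zero]
  | add u v hu hv => simp only [add_tmul, map_add, hu, hv]
  | tmul x y =>
    induction L using TensorProduct.induction_on with
    | zero => simp only [tmul_zero, map_zero]
    | add L L' hL hL' => simp only [tmul_add, map_add, hL, hL']
    | tmul f₁ f₂ =>
      apply LinearMap.ext
      intro ψ
      induction ψ using TensorProduct.induction_on with
      | zero => simp only [map_zero]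
      | add ψ ψ' hψ hψ' => simp only [map_add, hψ, hψ']
      | tmul ψ₁ ψ₂ =>
        rw [Mmap_tmul]
        simp only [LinearMap.comp_apply, piMap_tmul, Phi_tmul]
        rw [h1cov' x ψ₁ f₁, h2cov' y f₂ ψ₂]
        simp only [Nmap, LinearMap.comp_apply, LinearMap.rTensor_tmul,
          TensorProduct.map_tmul]
        generalize Coalgebra.comul (R := R) x = c
        generalize Coalgebra.comul (R := R) y = d
        induction c using TensorProduct.induction_on with
        | zero =>
          simp only [map_zero, LinearMap.zero_apply, zero_tmul, add_tmul, map_add]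
        | add c c' hc hc' =>
          simp only [map_add, LinearMap.add_apply, add_tmul, hc, hc']
        | tmul x₁ x₂ =>
          induction d using TensorProduct.induction_on with
          | zero =>
            simp only [map_zero, LinearMap.zero_apply, zero_tmul, tmul_zero, map_add,
              LinearMap.add_apply, add_tmul, tmul_add]
          | add d d' hd hd' =>
            simp only [map_add, LinearMap.add_apply, add_tmul, tmul_add, hd, hd']
          | tmul y₁ y₂ =>
            simp [LinearMap.mul'_apply, mSwap_tmul, assoc_tmul,
              LinearMap.mul_apply']

/-- `(x ⊗ u) ⊗ z ↦ Smap ((x⊗z) ⊗ (u ⊗ K))`, via the rearrangements of `E2`. -/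
noncomputable def chainK (K : F₁ ⊗[R] F₂) :
    (A ⊗[R] (A ⊗[R] A)) ⊗[R] A →ₗ[R] (F₁ ⊗[R] F₂) →ₗ[R] (F₁ ⊗[R] F₂) :=
  Smap ρ₁ ρ₂ ∘ₗ
    (TensorProduct.assoc R (A ⊗[R] A) (A ⊗[R] A) (F₁ ⊗[R] F₂)).toLinearMap ∘ₗ
    ((TensorProduct.mk R ((A ⊗[R] A) ⊗[R] (A ⊗[R] A)) (F₁ ⊗[R] F₂)).flip K) ∘ₗ
    mSwap R A ∘ₗ
    (TensorProduct.assoc R (A ⊗[R] A) A A).toLinearMap ∘ₗ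
    ((TensorProduct.assoc R A A A).symm.toLinearMap.rTensor A)

lemma chainK_tmul (K : F₁ ⊗[R] F₂) (x z : A) (u : A ⊗[R] A) :
    chainK ρ₁ ρ₂ K ((x ⊗ₜ[R] u) ⊗ₜ[R] z) =
      piMap R (Phi ρ₁ ρ₂ u K) ∘ₗ Phi ρ₁ ρ₂ (x ⊗ₜ[R] z) := by
  induction u using TensorProduct.induction_on with
  | zero =>
    simp only [tmul_zero, zero_tmul, map_zero, LinearMap.zero_apply,
      LinearMap.zero_comp]
  | add u v hu hv =>
    simp only [tmul_add, add_tmul, map_add, LinearMap.add_apply, hu, hv,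
      LinearMap.add_comp]
  | tmul c₁ c₂ =>
    simp only [chainK, LinearMap.comp_apply, LinearMap.rTensor_tmul,
      LinearEquiv.coe_coe, assoc_symm_tmul, assoc_tmul, mSwap_tmul,
      LinearMap.flip_apply, TensorProduct.mk_apply, Smap_tmul]

lemma piMap_oneone (L : F₁ ⊗[R] F₂) :
    piMap R L ((1 : F₁) ⊗ₜ[R] (1 : F₂)) = L := by
  induction L using TensorProduct.induction_on with
  | zero => simp only [map_zero, LinearMap.zero_apply]
  | add L L' hL hL' => simp only [map_add, LinearMap.add_apply, hL, hL']
  | tmul f₁ f₂ => simp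

lemma Phi_oneone
    (h1unit : ∀ a : A, ρ₁ a 1 = Coalgebra.counit (R := R) a • (1 : F₁))
    (h2unit : ∀ a : A, ρ₂ a 1 = Coalgebra.counit (R := R) a • (1 : F₂))
    (u : A ⊗[R] A) :
    Phi ρ₁ ρ₂ u ((1 : F₁) ⊗ₜ[R] (1 : F₂)) =
      (TensorProduct.lid R R)
          (TensorProduct.map Coalgebra.counit Coalgebra.counit u) •
        ((1 : F₁) ⊗ₜ[R] (1 : F₂)) := by
  induction u using TensorProduct.induction_on with
  | zero => simp only [map_zero, LinearMap.zero_apply, zero_smul]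
  | add u v hu hv => simp only [map_add, LinearMap.add_apply, add_smul, hu, hv]
  | tmul x y =>
    simp only [Phi_tmul, TensorProduct.map_tmul, lid_tmul, smul_eq_mul,
      h1unit x, h2unit y, smul_tmul', tmul_smul, smul_smul]
    rw [mul_comm]

end Chain

/-- Let `A` be a bialgebra over a commutative ring `R` and let `F₁`, `F₂` be two
`A`-module algebras (with actions `ρ₁`, `ρ₂`).  For `K ∈ F₁ ⊗[R] F₂`, the linear
operator `π K : F₁ ⊗[R] F₂ → F₁ ⊗[R] F₂` is a morphism of `A`-modules iff `K`
is an invariant: `a • K = ε(a) • K` for all `a ∈ A`. -/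
theorem piMap_equivariant_iff_invariant
    {R A F₁ F₂ : Type*} [CommRing R] [Ring A] [Bialgebra R A]
    [Ring F₁] [Algebra R F₁] [Ring F₂] [Algebra R F₂]
    (ρ₁ : A →ₗ[R] F₁ →ₗ[R] F₁) (ρ₂ : A →ₗ[R] F₂ →ₗ[R] F₂)
    -- `ρ₁`, `ρ₂` are module structures:
    (h1one : ρ₁ 1 = LinearMap.id) (h1mul : ∀ a b : A, ρ₁ (a * b) = ρ₁ a ∘ₗ ρ₁ b)
    (h2one : ρ₂ 1 = LinearMap.id) (h2mul : ∀ a b : A, ρ₂ (a * b) = ρ₂ a ∘ₗ ρ₂ b)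
    -- the multiplications `F₁ ⊗ F₁ → F₁` and `F₂ ⊗ F₂ → F₂` are `A`-linear:
    (h1cov : ∀ a : A,
      (LinearMap.mul' R F₁) ∘ₗ tensorAct R ρ₁ ρ₁ a = ρ₁ a ∘ₗ LinearMap.mul' R F₁)
    (h2cov : ∀ a : A,
      (LinearMap.mul' R F₂) ∘ₗ tensorAct R ρ₂ ρ₂ a = ρ₂ a ∘ₗ LinearMap.mul' R F₂)
    -- the units are invariant: `a • 1 = ε(a) • 1`:
    (h1unit : ∀ a : A, ρ₁ a 1 = Coalgebra.counit (R := R) a • (1 : F₁))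
    (h2unit : ∀ a : A, ρ₂ a 1 = Coalgebra.counit (R := R) a • (1 : F₂))
    (K : F₁ ⊗[R] F₂) :
    (∀ a : A, tensorAct R ρ₁ ρ₂ a ∘ₗ piMap R K = piMap R K ∘ₗ tensorAct R ρ₁ ρ₂ a) ↔
      ∀ a : A, tensorAct R ρ₁ ρ₂ a K = Coalgebra.counit (R := R) a • K := by
  constructor
  · -- equivariance ⇒ invariance: evaluate at `1 ⊗ 1`.
    intro h a
    have h11 := LinearMap.congr_fun (h a) ((1 : F₁) ⊗ₜ[R] (1 : F₂))
    simp only [LinearMap.comp_apply, piMap_oneone] at h11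
    rw [tensorAct_eq, Phi_oneone ρ₁ ρ₂ h1unit h2unit, counit_counit,
      map_smul, piMap_oneone] at h11
    rw [tensorAct_eq]
    exact h11
  · -- invariance ⇒ equivariance
    intro hinv a
    have hKinv : ∀ b : A,
        Phi ρ₁ ρ₂ (Coalgebra.comul b) K = Coalgebra.counit (R := R) b • K := by
      intro b; rw [← tensorAct_eq]; exact hinv b
    rw [tensorAct_eq]
    have e1 : Phi ρ₁ ρ₂ (Coalgebra.comul a) ∘ₗ piMap R K
        = Nmap ρ₁ ρ₂ (Coalgebra.comul a ⊗ₜ[R] K) := by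
      rw [← Mmap_tmul, claim1 ρ₁ ρ₂ h1cov h2cov]
    have e3 := LinearMap.congr_fun (E2 (R := R) (A := A)) a
    simp only [LinearMap.comp_apply] at e3
    have e2 : Nmap ρ₁ ρ₂ (Coalgebra.comul a ⊗ₜ[R] K)
        = chainK ρ₁ ρ₂ K
            ((((Coalgebra.comul (R := R) (A := A)).lTensor A).rTensor A)
              (((Coalgebra.comul (R := R) (A := A)).rTensor A) (Coalgebra.comul a))) := by
      simp only [Nmap, LinearMap.comp_apply, LinearMap.rTensor_tmul]
      rw [e3]
      simp only [chainK, LinearMap.comp_apply, LinearMap.flip_apply,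
        TensorProduct.mk_apply, LinearEquiv.coe_coe]
    have e4 : chainK ρ₁ ρ₂ K ∘ₗ (((Coalgebra.comul (R := R) (A := A)).lTensor A).rTensor A)
        = (LinearMap.llcomp R (F₁ ⊗[R] F₂) (F₁ ⊗[R] F₂) (F₁ ⊗[R] F₂) (piMap R K)) ∘ₗ
          Phi ρ₁ ρ₂ ∘ₗ
          (((TensorProduct.rid R A).toLinearMap ∘ₗ
            (Coalgebra.counit (R := R) (A := A)).lTensor A).rTensor A) := by
      apply TensorProduct.ext'
      intro p z
      induction p using TensorProduct.induction_on with
      | zero => simp only [zero_tmul, map_zero]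
      | add p q hp hq => simp only [add_tmul, map_add, hp, hq]
      | tmul x b =>
        simp only [LinearMap.comp_apply, LinearMap.rTensor_tmul, LinearMap.lTensor_tmul]
        rw [chainK_tmul, hKinv b]
        simp only [map_smul, LinearEquiv.coe_coe, rid_tmul, LinearMap.smul_comp,
          LinearMap.llcomp_apply', LinearMap.smul_apply]
        rw [← smul_tmul', map_smul, LinearMap.comp_smul]
    have e5 := LinearMap.congr_fun (counit_collapse (R := R) (A := A)) a
    simp only [LinearMap.comp_apply] at e5
    have e6 := LinearMap.congr_fun e4
        (((Coalgebra.comul (R := R) (A := A)).rTensor A) (Coalgebra.comul a))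
    simp only [LinearMap.comp_apply] at e6
    rw [e1, e2, e6, e5, LinearMap.llcomp_apply']
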